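/- Let δ = (α-d+2)/(2H) ∈ (0,1], H ∈ (1/2,1), t ∈ [0,T], h ∈ [0,1]. Then ((n-1)!/Γ((n-1)(1+δ)+1)) ∫_t^{t+h} (t+h-s)^δ s^{(n-1)(1+δ)} ds ≤ C^n (t+1)^{(n-1)(1+δ)} h^{δ+1} / ((n-1)!)^δ for a constant C depending only on δ. -/

import Mathlib

open MeasureTheory Real intervalIntegral

lemma gamma_fact_bound (δ : ℝ) (hδ0 : 0 < δ) (hδ1 : δ ≤ 1) (m : ℕ) :
    ((m.factorial : ℝ)) ^ (1 + δ) ≤ 2 ^ (m + 1) * Real.Gamma ((m : ℝ) * (1 + δ) + 1) := by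
  rcases Nat.eq_zero_or_pos m with hm | hm
  · subst hm
    norm_num [Real.Gamma_one, Real.one_rpow]
  · set k := ⌊δ * m⌋₊ with hk
    have hkle : (k : ℝ) ≤ δ * m := Nat.floor_le (by positivity)
    have hklt : δ * m < k + 1 := Nat.lt_floor_add_one _
    have h1m : (1 : ℝ) ≤ m := by exact_mod_cast hm
    -- Gamma monotone step
    have hGam : ((m + k).factorial : ℝ) ≤ Real.Gamma ((m : ℝ) * (1 + δ) + 1) := by
      have := Real.Gamma_nat_eq_factorial (m + k)
      rw [← this]
      rcases eq_or_lt_of_le (show ((m + k : ℕ) : ℝ) + 1 ≤ (m : ℝ) * (1 + δ) + 1 by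
        push_cast; nlinarith) with he | hlt
      · rw [he]
      · apply le_of_lt
        apply Real.Gamma_strictMonoOn_Ici _ _ hlt
        · simp only [Set.mem_Ici]
          push_cast
          nlinarith
        · simp only [Set.mem_Ici]
          nlinarith
    -- factorial product bound
    have hfact : (m.factorial : ℝ) * (m : ℝ) ^ k ≤ ((m + k).factorial : ℝ) := by
      have := Nat.factorial_mul_pow_le_factorial (m := m) (n := k)
      calc (m.factorial : ℝ) * (m : ℝ) ^ k ≤ (m.factorial : ℝ) * ((m : ℝ) + 1) ^ k := by
            gcongr; linarith
        _ ≤ ((m + k).factorial : ℝ) := by exact_mod_cast this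
    -- rpow bound
    have hfpos : (0 : ℝ) < m.factorial := by exact_mod_cast m.factorial_pos
    have hrw : ((m.factorial : ℝ)) ^ (1 + δ) = (m.factorial : ℝ) * ((m.factorial : ℝ)) ^ δ := by
      rw [Real.rpow_add hfpos, Real.rpow_one]
    have h2 : ((m.factorial : ℝ)) ^ δ ≤ (m : ℝ) ^ (δ * m) := by
      calc ((m.factorial : ℝ)) ^ δ ≤ (((m : ℝ) ^ m)) ^ δ := by
            apply Real.rpow_le_rpow (by positivity) _ hδ0.le
            exact_mod_cast Nat.factorial_le_pow m
        _ = (m : ℝ) ^ (δ * m) := by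
            rw [← Real.rpow_natCast (m : ℝ) m, ← Real.rpow_mul (by positivity)]
            ring_nf
    have h3 : (m : ℝ) ^ (δ * m) ≤ (m : ℝ) ^ (k + 1 : ℕ) := by
      calc (m : ℝ) ^ (δ * m) ≤ (m : ℝ) ^ ((k : ℝ) + 1) :=
            Real.rpow_le_rpow_of_exponent_le h1m (by linarith)
        _ = (m : ℝ) ^ (k + 1 : ℕ) := by
            rw [← Real.rpow_natCast (m : ℝ) (k + 1)]; norm_num
    have hm2 : (m : ℝ) ≤ 2 ^ m := by exact_mod_cast (Nat.lt_two_pow_self (n := m)).le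
    calc ((m.factorial : ℝ)) ^ (1 + δ)
        = (m.factorial : ℝ) * ((m.factorial : ℝ)) ^ δ := hrw
      _ ≤ (m.factorial : ℝ) * ((m : ℝ) ^ (k + 1 : ℕ)) := by
          gcongr
          exact h2.trans h3
      _ = (m : ℝ) * ((m.factorial : ℝ) * (m : ℝ) ^ k) := by ring
      _ ≤ 2 ^ m * ((m + k).factorial : ℝ) :=
          mul_le_mul hm2 hfact (by positivity) (by positivity)
      _ ≤ 2 ^ (m + 1) * Real.Gamma ((m : ℝ) * (1 + δ) + 1) := by
          have hG0 : (0 : ℝ) < Real.Gamma ((m : ℝ) * (1 + δ) + 1) :=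
            Real.Gamma_pos_of_pos (by nlinarith)
          have : (2 : ℝ) ^ m ≤ 2 ^ (m + 1) := by
            apply pow_le_pow_right₀ one_le_two (Nat.le_succ m)
          calc (2:ℝ) ^ m * ((m + k).factorial : ℝ)
              ≤ 2 ^ m * Real.Gamma ((m : ℝ) * (1 + δ) + 1) := by gcongr
            _ ≤ 2 ^ (m + 1) * Real.Gamma ((m : ℝ) * (1 + δ) + 1) := by gcongr

theorem time_increment_simplex_bound (d : ℕ) (hd : 1 ≤ d) (α H δ : ℝ)
    (hH : H ∈ Set.Ioo (1/2 : ℝ) 1) (h1 : (d : ℝ) - 2 < α) (h2 : α < d)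
    (hδdef : δ = (α - d + 2) / (2 * H)) (hδ : δ ∈ Set.Ioc (0 : ℝ) 1) :
    ∃ C : ℝ, 0 < C ∧ ∀ n : ℕ, 1 ≤ n → ∀ T : ℝ, 0 < T → ∀ t ∈ Set.Icc (0 : ℝ) T,
      ∀ h ∈ Set.Icc (0 : ℝ) 1,
      ((n - 1).factorial : ℝ) / Real.Gamma ((n - 1) * (1 + δ) + 1)
          * ∫ s in t..(t + h), (t + h - s) ^ δ * s ^ (((n : ℝ) - 1) * (1 + δ))
        ≤ C ^ n * (t + 1) ^ (((n : ℝ) - 1) * (1 + δ)) * h ^ (δ + 1)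
            / ((n - 1).factorial : ℝ) ^ δ := by
  obtain ⟨hδ0, hδ1⟩ := hδ
  refine ⟨2, two_pos, ?_⟩
  intro n hn T hT t ht h hh
  obtain ⟨ht0, htT⟩ := ht
  obtain ⟨hh0, hh1⟩ := hh
  set m := n - 1 with hm
  have hnm : (n : ℝ) - 1 = (m : ℝ) := by
    rw [hm]; push_cast [Nat.cast_sub hn]; ring
  set p := ((n : ℝ) - 1) * (1 + δ) with hp
  have hp0 : 0 ≤ p := by
    rw [hp, hnm]; positivity
  have hGpos : 0 < Real.Gamma (((n : ℝ) - 1) * (1 + δ) + 1) := by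
    apply Real.Gamma_pos_of_pos; rw [hnm]; positivity
  -- bound the integral
  have hIb : (∫ s in t..(t + h), (t + h - s) ^ δ * s ^ p)
      ≤ h ^ δ * (t + 1) ^ p * h := by
    have hb : ∀ s ∈ Set.uIoc t (t + h), ‖(t + h - s) ^ δ * s ^ p‖ ≤ h ^ δ * (t + 1) ^ p := by
      intro s hs
      rw [Set.uIoc_of_le (by linarith)] at hs
      obtain ⟨hs1, hs2⟩ := hs
      have hs0 : 0 ≤ s := le_trans ht0 hs1.le
      rw [norm_mul, Real.norm_rpow_of_nonneg (by linarith), Real.norm_rpow_of_nonneg hs0,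
        Real.norm_of_nonneg (by linarith), Real.norm_of_nonneg hs0]
      apply mul_le_mul
      · exact Real.rpow_le_rpow (by linarith) (by linarith) hδ0.le
      · exact Real.rpow_le_rpow hs0 (by linarith) hp0
      · positivity
      · positivity
    calc (∫ s in t..(t + h), (t + h - s) ^ δ * s ^ p)
        ≤ ‖∫ s in t..(t + h), (t + h - s) ^ δ * s ^ p‖ := le_norm_self _
      _ ≤ h ^ δ * (t + 1) ^ p * |t + h - t| :=
          intervalIntegral.norm_integral_le_of_norm_le_const hb
      _ = h ^ δ * (t + 1) ^ p * h := by rw [abs_of_nonneg (by linarith)]; ring_nf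
  have hGf : ((m.factorial : ℝ)) ^ (1 + δ) ≤ 2 ^ (m + 1) * Real.Gamma (((n : ℝ) - 1) * (1 + δ) + 1) := by
    rw [hnm]
    exact gamma_fact_bound δ hδ0 hδ1 m
  have hmn : m + 1 = n := Nat.succ_pred_eq_of_pos hn
  have hfpos : (0 : ℝ) < m.factorial := by exact_mod_cast m.factorial_pos
  have hhδ1 : h ^ δ * h = h ^ (δ + 1) := by
    rcases eq_or_lt_of_le hh0 with he | hpos
    · rw [← he]; rw [Real.zero_rpow (by linarith), Real.zero_rpow (by linarith)]; ring
    · rw [Real.rpow_add hpos, Real.rpow_one]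
  -- final combination
  have key : (m.factorial : ℝ) / Real.Gamma (((n : ℝ) - 1) * (1 + δ) + 1)
      ≤ 2 ^ n / ((m.factorial : ℝ)) ^ δ := by
    rw [div_le_div_iff₀ hGpos (by positivity)]
    calc (m.factorial : ℝ) * ((m.factorial : ℝ)) ^ δ
        = ((m.factorial : ℝ)) ^ (1 + δ) := by
          rw [Real.rpow_add hfpos, Real.rpow_one]
      _ ≤ 2 ^ (m + 1) * Real.Gamma (((n : ℝ) - 1) * (1 + δ) + 1) := hGf
      _ = 2 ^ n * Real.Gamma (((n : ℝ) - 1) * (1 + δ) + 1) := by rw [hmn]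
  calc ((n - 1).factorial : ℝ) / Real.Gamma ((n - 1) * (1 + δ) + 1)
          * ∫ s in t..(t + h), (t + h - s) ^ δ * s ^ (((n : ℝ) - 1) * (1 + δ))
      ≤ ((m.factorial : ℝ) / Real.Gamma (((n : ℝ) - 1) * (1 + δ) + 1)) * (h ^ δ * (t + 1) ^ p * h) := by
        apply mul_le_mul_of_nonneg_left hIb
        positivity
    _ ≤ (2 ^ n / ((m.factorial : ℝ)) ^ δ) * (h ^ δ * (t + 1) ^ p * h) := by
        apply mul_le_mul_of_nonneg_right key
        positivity
    _ = 2 ^ n * (t + 1) ^ p * (h ^ δ * h) / ((m.factorial : ℝ)) ^ δ := by ring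
    _ = 2 ^ n * (t + 1) ^ (((n : ℝ) - 1) * (1 + δ)) * h ^ (δ + 1)
            / ((n - 1).factorial : ℝ) ^ δ := by rw [hhδ1]
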